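/- For a positive definite N×N complex matrix X and 0 < s < 1, one has tr X^s = inf over positive definite Y of ( s·tr(XY) + (1−s)·tr Y^{−s/(1−s)} ). -/

import Mathlib

open Matrix ComplexOrder

noncomputable def mpow {n : Type*} [Fintype n] [DecidableEq n]
    (A : Matrix n n ℂ) (p : ℝ) : Matrix n n ℂ :=
  cfc (fun x : ℝ => x ^ p) A

noncomputable def rtr {n : Type*} [Fintype n] (A : Matrix n n ℂ) : ℝ :=
  (Matrix.trace A).re

section Aux

variable {n : Type*} [Fintype n] [DecidableEq n]

lemma contOn_spec (A : Matrix n n ℂ) (f : ℝ → ℝ) : ContinuousOn f (spectrum ℝ A) :=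
  (Matrix.finite_real_spectrum (A := A)).continuousOn f

lemma contOn_image (A : Matrix n n ℂ) (f g : ℝ → ℝ) :
    ContinuousOn g (f '' spectrum ℝ A) :=
  ((Matrix.finite_real_spectrum (A := A)).image f).continuousOn g

lemma rtr_cfc {A : Matrix n n ℂ} (hA : A.IsHermitian) (f : ℝ → ℝ) :
    rtr (cfc f A) = ∑ i, f (hA.eigenvalues i) := by
  rw [hA.cfc_eq, Matrix.IsHermitian.cfc, Unitary.conjStarAlgAut_apply, rtr, Matrix.trace_mul_cycle,
    (Matrix.mem_unitaryGroup_iff').mp (Matrix.IsHermitian.eigenvectorUnitary hA).2, one_mul,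
    Matrix.trace_diagonal]
  simp [Complex.re_sum]

end Aux
lemma scalar_young {s : ℝ} (hs0 : 0 < s) (hs1 : s < 1) {a b : ℝ} (ha : 0 < a) (hb : 0 < b) :
    a ^ s ≤ s * (a * b) + (1 - s) * b ^ (-s / (1 - s)) := by
  have h1s : (0:ℝ) < 1 - s := by linarith
  set c : ℝ := b ^ (-(1:ℝ)/(1-s)) with hc
  have hcpos : 0 < c := Real.rpow_pos_of_pos hb _
  have h1 : c ^ (s - 1) = b := by
    rw [hc, ← Real.rpow_mul hb.le]
    have : -1 / (1 - s) * (s - 1) = 1 := by field_simp; ring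
    rw [this, Real.rpow_one]
  have h2 : c ^ s = b ^ (-s / (1 - s)) := by
    rw [hc, ← Real.rpow_mul hb.le]
    congr 1
    field_simp
  have hber := rpow_one_add_le_one_add_mul_self
    (s := a / c - 1) (by nlinarith [div_pos ha hcpos]) hs0.le hs1.le
  rw [add_sub_cancel] at hber
  have hmul := mul_le_mul_of_nonneg_left hber (Real.rpow_nonneg hcpos.le s)
  have hL : c ^ s * (a / c) ^ s = a ^ s := by
    rw [← Real.mul_rpow hcpos.le (by positivity), mul_div_cancel₀ _ hcpos.ne']
  have hcs1 : c ^ s / c = c ^ (s - 1) := by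
    rw [Real.rpow_sub hcpos, Real.rpow_one]
  have hR : c ^ s * (1 + s * (a / c - 1)) = (1 - s) * c ^ s + s * (a * (c ^ s / c)) := by
    field_simp
    ring
  rw [hL, hR, hcs1, h1] at hmul
  rw [← h2]
  linarith
section Aux2
variable {n : Type*} [Fintype n] [DecidableEq n]

lemma unitary_conj_posDef (U : Matrix.unitaryGroup n ℂ) {d : n → ℝ} (hd : ∀ i, 0 < d i) :
    ((U : Matrix n n ℂ) * Matrix.diagonal (fun i => (d i : ℂ)) *
      star (U : Matrix n n ℂ)).PosDef := by
  have hU : (U : Matrix n n ℂ) * star (U : Matrix n n ℂ) = 1 :=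
    (Matrix.mem_unitaryGroup_iff).mp U.2
  have hU' : star (U : Matrix n n ℂ) * (U : Matrix n n ℂ) = 1 :=
    (Matrix.mem_unitaryGroup_iff').mp U.2
  have hD : (Matrix.diagonal (fun i => (d i : ℂ))).PosDef :=
    Matrix.PosDef.diagonal fun i => by
      rw [Complex.zero_lt_real]; exact hd i
  refine Matrix.PosDef.of_dotProduct_mulVec_pos ?_ ?_
  · rw [Matrix.star_eq_conjTranspose]
    exact Matrix.isHermitian_mul_mul_conjTranspose _ hD.1
  · intro x hx
    have hy : star (U : Matrix n n ℂ) *ᵥ x ≠ 0 := by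
      intro h
      apply hx
      have : (U : Matrix n n ℂ) *ᵥ (star (U : Matrix n n ℂ) *ᵥ x) = x := by
        rw [Matrix.mulVec_mulVec, hU, Matrix.one_mulVec]
      rw [h, Matrix.mulVec_zero] at this
      exact this.symm
    have := hD.dotProduct_mulVec_pos hy
    convert this using 1
    rw [← Matrix.mulVec_mulVec, ← Matrix.mulVec_mulVec, Matrix.dotProduct_mulVec (star x)]
    congr 1
    rw [Matrix.star_mulVec, Matrix.star_eq_conjTranspose, Matrix.conjTranspose_conjTranspose]

end Aux2
section Aux3
variable {n : Type*} [Fintype n] [DecidableEq n]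

lemma cfc_posDef {A : Matrix n n ℂ} (hA : A.IsHermitian) (f : ℝ → ℝ)
    (hf : ∀ i, 0 < f (hA.eigenvalues i)) : (cfc f A).PosDef := by
  rw [hA.cfc_eq, Matrix.IsHermitian.cfc]
  exact unitary_conj_posDef _ hf

lemma spectrum_pos {A : Matrix n n ℂ} (hA : A.PosDef) {x : ℝ}
    (hx : x ∈ spectrum ℝ A) : 0 < x := by
  rw [hA.1.spectrum_real_eq_range_eigenvalues] at hx
  obtain ⟨i, rfl⟩ := hx
  exact hA.eigenvalues_pos i

lemma mpow_mpow {A : Matrix n n ℂ} (hA : A.PosDef) (p q : ℝ) :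
    mpow (mpow A p) q = mpow A (p * q) := by
  have hsa : IsSelfAdjoint A := hA.1
  unfold mpow
  rw [← cfc_comp (fun x : ℝ => x ^ q) (fun x : ℝ => x ^ p) A hsa
    (contOn_image A _ _) (contOn_spec A _)]
  apply cfc_congr
  intro x hx
  have hx0 : 0 < x := spectrum_pos hA hx
  simp only [Function.comp_apply]
  rw [← Real.rpow_mul hx0.le]

lemma mul_mpow {A : Matrix n n ℂ} (hA : A.PosDef) (p : ℝ) :
    A * mpow A p = cfc (fun x : ℝ => x * x ^ p) A := by
  have hsa : IsSelfAdjoint A := hA.1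
  rw [mpow]
  nth_rewrite 1 [← cfc_id ℝ A hsa]
  rw [← cfc_mul _ _ A (contOn_spec A _) (contOn_spec A _)]
  rfl

end Aux3
section Aux4
variable {n : Type*} [Fintype n] [DecidableEq n]

lemma sum_normSq_row {W : Matrix n n ℂ} (hW : W * star W = 1) (i : n) :
    ∑ j, Complex.normSq (W i j) = 1 := by
  have h := congrArg (fun M : Matrix n n ℂ => (M i i).re) hW
  simp only [Matrix.mul_apply, Matrix.star_eq_conjTranspose, Matrix.conjTranspose_apply,
    Matrix.one_apply_eq, Complex.one_re, Complex.re_sum] at h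
  rw [← h]
  apply Finset.sum_congr rfl
  intro j _
  rw [show star (W i j) = (starRingEnd ℂ) (W i j) from rfl, Complex.mul_conj,
    Complex.ofReal_re]

lemma sum_normSq_col {W : Matrix n n ℂ} (hW : star W * W = 1) (j : n) :
    ∑ i, Complex.normSq (W i j) = 1 := by
  have h := congrArg (fun M : Matrix n n ℂ => (M j j).re) hW
  simp only [Matrix.mul_apply, Matrix.star_eq_conjTranspose, Matrix.conjTranspose_apply,
    Matrix.one_apply_eq, Complex.one_re, Complex.re_sum] at h
  rw [← h]
  apply Finset.sum_congr rfl
  intro i _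
  rw [show star (W i j) = (starRingEnd ℂ) (W i j) from rfl, mul_comm, Complex.mul_conj,
    Complex.ofReal_re]

end Aux4
section Aux5
variable {n : Type*} [Fintype n] [DecidableEq n]

lemma trace_mul_hermitian {A B : Matrix n n ℂ} (hA : A.IsHermitian) (hB : B.IsHermitian) :
    Matrix.trace (A * B) = ∑ i, ∑ j,
      ((star (hA.eigenvectorUnitary : Matrix n n ℂ) * (hB.eigenvectorUnitary : Matrix n n ℂ)) i j
        * star ((star (hA.eigenvectorUnitary : Matrix n n ℂ) *
            (hB.eigenvectorUnitary : Matrix n n ℂ)) i j))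
        * ((hA.eigenvalues i : ℂ) * (hB.eigenvalues j : ℂ)) := by
  set U : Matrix n n ℂ := (hA.eigenvectorUnitary : Matrix n n ℂ) with hU0
  set V : Matrix n n ℂ := (hB.eigenvectorUnitary : Matrix n n ℂ) with hV0
  set W : Matrix n n ℂ := star U * V with hWdef
  have hUU : U * star U = 1 := (Matrix.mem_unitaryGroup_iff).mp hA.eigenvectorUnitary.2
  have hUU' : star U * U = 1 := (Matrix.mem_unitaryGroup_iff').mp hA.eigenvectorUnitary.2
  set Da : Matrix n n ℂ := Matrix.diagonal (RCLike.ofReal ∘ hA.eigenvalues) with hDa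
  set Db : Matrix n n ℂ := Matrix.diagonal (RCLike.ofReal ∘ hB.eigenvalues) with hDb
  have hstep : A * B = U * (Da * (W * Db * star W)) * star U := by
    conv_lhs => rw [hA.spectral_theorem, hB.spectral_theorem]
    rw [hWdef]
    simp only [Unitary.conjStarAlgAut_apply, StarMul.star_mul, star_star, Matrix.mul_assoc, ← hU0, ← hV0, ← hDa, ← hDb, hUU,
      Matrix.mul_one]
  rw [hstep, Matrix.trace_mul_cycle, ← Matrix.mul_assoc, hUU', Matrix.one_mul]
  have hentry : ∀ i, (Da * (W * Db * star W)) i i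
      = (hA.eigenvalues i : ℂ) * ∑ j, (W i j * (hB.eigenvalues j : ℂ)) * star (W i j) := by
    intro i
    rw [hDa, Matrix.diagonal_mul]
    congr 1
    rw [Matrix.mul_apply]
    apply Finset.sum_congr rfl
    intro j _
    rw [hDb, Matrix.mul_diagonal, Matrix.star_eq_conjTranspose, Matrix.conjTranspose_apply]
    simp
  rw [Matrix.trace]
  simp only [Matrix.diag_apply, hentry]
  apply Finset.sum_congr rfl
  intro i _
  rw [Finset.mul_sum]
  apply Finset.sum_congr rfl
  intro j _
  ring

end Aux5
section Aux6
variable {n : Type*} [Fintype n] [DecidableEq n]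

lemma rtr_mul_hermitian {A B : Matrix n n ℂ} (hA : A.IsHermitian) (hB : B.IsHermitian) :
    rtr (A * B) = ∑ i, ∑ j,
      Complex.normSq ((star (hA.eigenvectorUnitary : Matrix n n ℂ) *
        (hB.eigenvectorUnitary : Matrix n n ℂ)) i j)
        * (hA.eigenvalues i * hB.eigenvalues j) := by
  rw [rtr, trace_mul_hermitian hA hB, Complex.re_sum]
  apply Finset.sum_congr rfl
  intro i _
  rw [Complex.re_sum]
  apply Finset.sum_congr rfl
  intro j _
  set z := (star (hA.eigenvectorUnitary : Matrix n n ℂ) *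
    (hB.eigenvectorUnitary : Matrix n n ℂ)) i j
  rw [show star z = (starRingEnd ℂ) z from rfl, Complex.mul_conj, ← Complex.ofReal_mul,
    ← Complex.ofReal_mul, Complex.ofReal_re]

lemma young_trace {A B : Matrix n n ℂ} (hA : A.PosDef) (hB : B.PosDef)
    {s : ℝ} (hs0 : 0 < s) (hs1 : s < 1) :
    rtr (mpow A s) ≤ s * rtr (A * B) + (1 - s) * rtr (mpow B (-s / (1 - s))) := by
  set U : Matrix n n ℂ := (hA.1.eigenvectorUnitary : Matrix n n ℂ) with hU0
  set V : Matrix n n ℂ := (hB.1.eigenvectorUnitary : Matrix n n ℂ) with hV0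
  set W : Matrix n n ℂ := star U * V with hWdef
  have hUU : U * star U = 1 := (Matrix.mem_unitaryGroup_iff).mp hA.1.eigenvectorUnitary.2
  have hUU' : star U * U = 1 := (Matrix.mem_unitaryGroup_iff').mp hA.1.eigenvectorUnitary.2
  have hVV : V * star V = 1 := (Matrix.mem_unitaryGroup_iff).mp hB.1.eigenvectorUnitary.2
  have hVV' : star V * V = 1 := (Matrix.mem_unitaryGroup_iff').mp hB.1.eigenvectorUnitary.2
  have hW1 : W * star W = 1 := by
    rw [hWdef]
    simp only [StarMul.star_mul, star_star, Matrix.mul_assoc]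
    rw [← Matrix.mul_assoc V, hVV, Matrix.one_mul, hUU']
  have hW2 : star W * W = 1 := by
    rw [hWdef]
    simp only [StarMul.star_mul, star_star, Matrix.mul_assoc]
    rw [← Matrix.mul_assoc U, hUU, Matrix.one_mul, hVV']
  have hrow := sum_normSq_row hW1
  have hcol := sum_normSq_col hW2
  have hAB : rtr (A * B) = ∑ i, ∑ j, Complex.normSq (W i j)
      * (hA.1.eigenvalues i * hB.1.eigenvalues j) := rtr_mul_hermitian hA.1 hB.1
  have hAs : rtr (mpow A s) = ∑ i, hA.1.eigenvalues i ^ s := rtr_cfc hA.1 _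
  have hBq : rtr (mpow B (-s / (1 - s))) = ∑ j, hB.1.eigenvalues j ^ (-s / (1 - s)) :=
    rtr_cfc hB.1 _
  rw [hAs, hAB, hBq]
  have key : ∀ i j, Complex.normSq (W i j) * hA.1.eigenvalues i ^ s ≤
      s * (Complex.normSq (W i j) * (hA.1.eigenvalues i * hB.1.eigenvalues j)) +
      (1 - s) * (Complex.normSq (W i j) * hB.1.eigenvalues j ^ (-s / (1 - s))) := by
    intro i j
    have hy := scalar_young hs0 hs1 (hA.eigenvalues_pos i) (hB.eigenvalues_pos j)
    have hw := Complex.normSq_nonneg (W i j)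
    nlinarith [mul_le_mul_of_nonneg_left hy hw]
  calc ∑ i, hA.1.eigenvalues i ^ s
      = ∑ i, ∑ j, Complex.normSq (W i j) * hA.1.eigenvalues i ^ s := by
        apply Finset.sum_congr rfl
        intro i _
        rw [← Finset.sum_mul, hrow i, one_mul]
    _ ≤ ∑ i, ∑ j, (s * (Complex.normSq (W i j) * (hA.1.eigenvalues i * hB.1.eigenvalues j)) +
          (1 - s) * (Complex.normSq (W i j) * hB.1.eigenvalues j ^ (-s / (1 - s)))) := by
        apply Finset.sum_le_sum
        intro i _
        exact Finset.sum_le_sum fun j _ => key i j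
    _ = s * (∑ i, ∑ j, Complex.normSq (W i j) * (hA.1.eigenvalues i * hB.1.eigenvalues j)) +
          (1 - s) * ∑ j, hB.1.eigenvalues j ^ (-s / (1 - s)) := by
        simp only [Finset.sum_add_distrib, ← Finset.mul_sum]
        congr 1
        rw [Finset.sum_comm]
        congr 1
        apply Finset.sum_congr rfl
        intro j _
        rw [← Finset.sum_mul, hcol j, one_mul]

end Aux6
theorem trace_pow_variational_inf {N : ℕ} (X : Matrix (Fin N) (Fin N) ℂ)
    (hX : X.PosDef) (s : ℝ) (hs0 : 0 < s) (hs1 : s < 1) :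
    rtr (mpow X s) =
      sInf { r : ℝ | ∃ Y : Matrix (Fin N) (Fin N) ℂ, Y.PosDef ∧
        r = s * rtr (X * Y) + (1 - s) * rtr (mpow Y (-s / (1 - s))) } := by
  have h1s : (0:ℝ) < 1 - s := by linarith
  set S := { r : ℝ | ∃ Y : Matrix (Fin N) (Fin N) ℂ, Y.PosDef ∧
    r = s * rtr (X * Y) + (1 - s) * rtr (mpow Y (-s / (1 - s))) } with hS
  set v := rtr (mpow X s) with hv
  have hY0 : (mpow X (s - 1)).PosDef :=
    cfc_posDef hX.1 _ fun i => Real.rpow_pos_of_pos (hX.eigenvalues_pos i) _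
  have hcomp : mpow (mpow X (s - 1)) (-s / (1 - s)) = mpow X s := by
    rw [mpow_mpow hX (s - 1) (-s / (1 - s))]
    have hne : 1 - s ≠ 0 := h1s.ne'
    have : (s - 1) * (-s / (1 - s)) = s := by
      field_simp
      ring
    rw [this]
  have htr1 : rtr (X * mpow X (s - 1)) = v := by
    rw [mul_mpow hX, hv, mpow, rtr_cfc hX.1, rtr_cfc hX.1]
    apply Finset.sum_congr rfl
    intro i _
    have hp := hX.eigenvalues_pos i
    nth_rewrite 1 [← Real.rpow_one (hX.1.eigenvalues i)]
    rw [← Real.rpow_add hp]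
    norm_num
  have hmem : v ∈ S := by
    refine ⟨mpow X (s - 1), hY0, ?_⟩
    rw [htr1, hcomp, ← hv]
    ring
  have hlb : ∀ r ∈ S, v ≤ r := by
    rintro r ⟨Y, hY, rfl⟩
    exact young_trace hX hY hs0 hs1
  exact le_antisymm (le_csInf ⟨v, hmem⟩ hlb) (csInf_le ⟨v, hlb⟩ hmem)
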